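/- arXiv:1604.04904 — 2 statements merged into one kernel-verified Lean document; each statement's English description precedes it below -/
import Mathlib

section
/- Let n be a positive natural number and set h = F_{6n-1} and k = F_{6n+1}, where F_m is the m-th Fibonacci number. Then s₅(h,k) + s₅(k,h) = (1/2)·(h/k + k/h - 2). -/
/-- The sawtooth function `((x))`: equals `x - ⌊x⌋ - 1/2` if `x` is not an integer,
and `0` if `x` is an integer. -/
def saw (x : ℚ) : ℚ := if x = (⌊x⌋ : ℚ) then 0 else x - ⌊x⌋ - 1/2

/-- The Hardy sum `s₅(h,k) = Σ_{j=1}^{k} (-1)^{j+⌊hj/k⌋}·((j/k))`. -/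
noncomputable def s5 (h k : ℤ) : ℚ :=
  ∑ j ∈ Finset.Icc (1 : ℤ) k,
    (-1 : ℚ) ^ (j + ⌊((h * j : ℤ) : ℚ) / (k : ℚ)⌋) * saw ((j : ℚ) / (k : ℚ))

open Finset


lemma neg_one_zpow_emod (a : ℤ) : (-1 : ℚ) ^ a = (-1 : ℚ) ^ (a % 2) := by
  conv_lhs => rw [← Int.emod_add_mul_ediv a 2]
  rw [zpow_add₀ (by norm_num : (-1:ℚ) ≠ 0), zpow_mul]
  norm_num

lemma neg_one_zpow_congr {a b : ℤ} (hab : a % 2 = b % 2) : (-1 : ℚ) ^ a = (-1 : ℚ) ^ b := by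
  rw [neg_one_zpow_emod a, neg_one_zpow_emod b, hab]

lemma floor_int_div (a b : ℤ) (hb : 0 < b) : ⌊(a : ℚ) / (b : ℚ)⌋ = a / b := by
  have h1 : ((b.toNat : ℕ) : ℚ) = (b : ℚ) := by
    rw [← Int.cast_natCast]; norm_cast; omega
  have h2 : ((b.toNat : ℕ) : ℤ) = b := by omega
  rw [← h1, Rat.floor_intCast_div_natCast, h2]

lemma emod_parity (h k j : ℤ) (hh : h % 2 = 1) (hk : k % 2 = 1) :
    (h * j % k) % 2 = (j + h * j / k) % 2 := by
  have e1 : (h * j) % 2 = j % 2 := by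
    rw [Int.mul_emod, hh, one_mul, Int.emod_emod_of_dvd _ dvd_rfl]
  have e2 : (k * (h * j / k)) % 2 = (h * j / k) % 2 := by
    rw [Int.mul_emod, hk, one_mul, Int.emod_emod_of_dvd _ dvd_rfl]
  have e3 : h * j % k = h * j - k * (h * j / k) := by
    rw [Int.emod_def]
  omega

lemma sum_Ioc_consec' (f : ℤ → ℚ) {a b c : ℤ} (hab : a ≤ b) (hbc : b ≤ c) :
    (∑ j ∈ Ioc a b, f j) + ∑ j ∈ Ioc b c, f j = ∑ j ∈ Ioc a c, f j := by
  rw [← Finset.Ioc_union_Ioc_eq_Ioc hab hbc,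
    Finset.sum_union (by simp [Finset.disjoint_left]; intros; omega)]

lemma sum_Ioc_succ_top' (f : ℤ → ℚ) {a b : ℤ} (hab : a ≤ b) :
    ∑ j ∈ Ioc a (b+1), f j = (∑ j ∈ Ioc a b, f j) + f (b+1) := by
  have h1 : Ioc b (b+1) = {b+1} := by ext x; simp; omega
  rw [← Finset.Ioc_union_Ioc_eq_Ioc hab (by omega : b ≤ b + 1),
    Finset.sum_union (by simp [Finset.disjoint_left]; intros; omega), h1, Finset.sum_singleton]

lemma sum_neg_one_Ioc (a : ℤ) : ∀ b : ℤ, a ≤ b →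
    ∑ j ∈ Ioc a b, (-1 : ℚ) ^ j = ((-1) ^ b - (-1) ^ a) / 2 := by
  refine Int.le_induction ?_ ?_
  · simp
  · intro b hab ih
    rw [sum_Ioc_succ_top' _ hab, ih, zpow_add₀ (by norm_num : (-1:ℚ) ≠ 0)]
    ring

lemma alt1 (m : ℤ) (hm : 0 ≤ m) (hpar : m % 2 = 0) :
    ∑ r ∈ Ioc (0:ℤ) m, (-1 : ℚ) ^ r = 0 := by
  rw [sum_neg_one_Ioc 0 m hm, neg_one_zpow_emod m, hpar]
  norm_num

lemma alt2 : ∀ m : ℤ, 0 ≤ m →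
    ∑ r ∈ Ioc (0:ℤ) m, (-1 : ℚ) ^ r * r
      = if m % 2 = 0 then (m : ℚ) / 2 else -((m : ℚ) + 1) / 2 := by
  refine Int.le_induction ?_ ?_
  · simp
  · intro m hm ih
    rw [sum_Ioc_succ_top' _ hm, ih, zpow_add₀ (by norm_num : (-1:ℚ) ≠ 0)]
    rcases Int.emod_two_eq m with hp | hp
    · rw [if_pos hp, if_neg (by omega), neg_one_zpow_emod m, hp]
      push_cast; ring_nf
    · rw [if_neg (by omega), if_pos (by omega), neg_one_zpow_emod m, hp]
      push_cast; ring_nf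
open Finset


-- reindexing by j ↦ h*j % k
lemma sum_emod_reindex (h k : ℤ) (hk : 0 < k) (hcop : IsCoprime h k) (f : ℤ → ℚ) :
    ∑ j ∈ Ioc (0:ℤ) (k-1), f (h * j % k) = ∑ r ∈ Ioc (0:ℤ) (k-1), f r := by
  have hinj : Set.InjOn (fun j => h * j % k) (Ioc (0:ℤ) (k-1)) := by
    intro j1 h1 j2 h2 heq
    simp only [Finset.coe_Ioc, Set.mem_Ioc] at h1 h2
    simp only at heq
    have hdvd : k ∣ h * (j2 - j1) := by
      have hmod : (h * j1) % k = (h * j2) % k := heq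
      have hd := Int.ModEq.dvd (hmod : Int.ModEq k (h*j1) (h*j2))
      have he : h * j2 - h * j1 = h * (j2 - j1) := by ring
      rwa [he] at hd
    have hdvd2 : k ∣ j2 - j1 := (hcop.symm.dvd_of_dvd_mul_left hdvd)
    have hmeq : j1 % k = j2 % k := Int.modEq_iff_dvd.mpr hdvd2
    rw [Int.emod_eq_of_lt (by omega) (by omega), Int.emod_eq_of_lt (by omega) (by omega)] at hmeq
    exact hmeq
  have hsub : Finset.image (fun j => h * j % k) (Ioc (0:ℤ) (k-1)) ⊆ Ioc (0:ℤ) (k-1) := by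
    intro r hr
    simp only [Finset.mem_image] at hr
    rcases hr with ⟨j, hj, rfl⟩
    simp only [Finset.mem_Ioc] at hj ⊢
    constructor
    · rcases lt_or_eq_of_le (Int.emod_nonneg (h*j) (by omega : k ≠ 0)) with hlt | heq
      · exact hlt
      · exfalso
        have hdvd : k ∣ h * j := Int.dvd_of_emod_eq_zero heq.symm
        have : k ∣ j := hcop.symm.dvd_of_dvd_mul_left hdvd
        have := Int.le_of_dvd (by omega) this
        omega
    · have := Int.emod_lt_of_pos (h*j) hk
      omega
  have himg : Finset.image (fun j => h * j % k) (Ioc (0:ℤ) (k-1)) = Ioc (0:ℤ) (k-1) := by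
    apply Finset.eq_of_subset_of_card_le hsub
    rw [Finset.card_image_of_injOn hinj]
  conv_rhs => rw [← himg]
  rw [Finset.sum_image (fun x hx y hy => hinj (by simpa using hx) (by simpa using hy))]

lemma saw_mid (j k : ℤ) (h0 : 0 < j) (h1 : j < k) : saw ((j:ℚ)/(k:ℚ)) = (j:ℚ)/k - 1/2 := by
  have hk : (0:ℚ) < k := by exact_mod_cast lt_trans h0 h1
  have hx0 : (0:ℚ) < (j:ℚ)/k := div_pos (by exact_mod_cast h0) hk
  have hx1 : (j:ℚ)/k < 1 := (div_lt_one hk).2 (by exact_mod_cast h1)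
  have hfl : ⌊(j:ℚ)/k⌋ = 0 := Int.floor_eq_zero_iff.2 ⟨le_of_lt hx0, hx1⟩
  rw [saw, if_neg (by rw [hfl]; push_cast; linarith), hfl]
  push_cast; ring

lemma saw_one (k : ℤ) (hk : 0 < k) : saw ((k:ℚ)/(k:ℚ)) = 0 := by
  have : (k:ℚ)/(k:ℚ) = 1 := div_self (by exact_mod_cast hk.ne')
  rw [this, saw, if_pos (by norm_num)]

lemma s5_eq (h k : ℤ) (hk : 1 < k) (hh1 : h % 2 = 1) (hk1 : k % 2 = 1)
    (hcop : IsCoprime h k) :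
    s5 h k = (∑ j ∈ Ioc (0:ℤ) (k-1), (-1:ℚ)^(h*j % k) * (j:ℚ)) / k := by
  have hk0 : 0 < k := by omega
  have hicc : Finset.Icc (1:ℤ) k = Finset.Ioc 0 k := by ext x; simp; omega
  rw [s5, hicc]
  simp only [Int.cast_mul]
  have hsplit := sum_Ioc_succ_top'
    (fun j => (-1 : ℚ) ^ (j + ⌊(h : ℚ) * (j : ℚ) / (k : ℚ)⌋) * saw ((j : ℚ) / (k : ℚ)))
    (show (0:ℤ) ≤ k - 1 by omega)
  rw [show k - 1 + 1 = k by ring] at hsplit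
  beta_reduce at hsplit
  rw [hsplit, saw_one k hk0, mul_zero, add_zero]
  have hcongr : ∀ j ∈ Ioc (0:ℤ) (k-1),
      (-1 : ℚ) ^ (j + ⌊(h : ℚ) * (j : ℚ) / (k : ℚ)⌋) * saw ((j : ℚ) / (k : ℚ))
      = ((-1:ℚ)^(h*j % k) * (j:ℚ)) * (1/(k:ℚ)) - (-1:ℚ)^(h*j % k) * (1/2) := by
    intro j hj
    simp only [Finset.mem_Ioc] at hj
    rw [show (h:ℚ) * (j:ℚ) = ((h*j : ℤ) : ℚ) from by push_cast; ring,
      floor_int_div (h*j) k hk0, saw_mid j k hj.1 (by omega),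
      neg_one_zpow_congr (show (j + h*j/k) % 2 = (h*j%k) % 2 from (emod_parity h k j hh1 hk1).symm)]
    ring
  rw [Finset.sum_congr rfl hcongr, Finset.sum_sub_distrib, ← Finset.sum_mul, ← Finset.sum_mul]
  have hz : ∑ j ∈ Ioc (0:ℤ) (k-1), (-1:ℚ)^(h*j % k)
      = ∑ r ∈ Ioc (0:ℤ) (k-1), (-1:ℚ)^r :=
    sum_emod_reindex h k hk0 hcop (fun r => (-1:ℚ)^r)
  rw [hz, alt1 (k-1) (by omega) (by omega)]
  ring

lemma step2 (h k : ℤ) (hk : 1 < k) (hh1 : h % 2 = 1) (hk1 : k % 2 = 1)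
    (hcop : IsCoprime h k) :
    (h:ℚ) * (∑ j ∈ Ioc (0:ℤ) (k-1), (-1:ℚ)^(h*j % k) * (j:ℚ))
      = (k:ℚ) * (∑ j ∈ Ioc (0:ℤ) (k-1), (-1:ℚ)^(h*j % k) * ((h*j/k : ℤ):ℚ))
        + ((k:ℚ)-1)/2 := by
  have hk0 : 0 < k := by omega
  rw [Finset.mul_sum, Finset.mul_sum]
  have hcongr : ∀ j ∈ Ioc (0:ℤ) (k-1),
      (h:ℚ) * ((-1:ℚ)^(h*j % k) * (j:ℚ))
      = (k:ℚ) * ((-1:ℚ)^(h*j % k) * ((h*j/k : ℤ):ℚ))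
        + (-1:ℚ)^(h*j % k) * ((h*j % k : ℤ):ℚ) := by
    intro j _
    have hdiv : ((h*j % k : ℤ):ℚ) + (k:ℚ) * ((h*j/k : ℤ):ℚ) = (h:ℚ) * (j:ℚ) := by
      exact_mod_cast Int.emod_add_mul_ediv (h*j) k
    linear_combination (-(-1:ℚ)^(h*j % k)) * hdiv
  rw [Finset.sum_congr rfl hcongr, Finset.sum_add_distrib]
  have hz : ∑ j ∈ Ioc (0:ℤ) (k-1), (-1:ℚ)^(h*j % k) * ((h*j % k : ℤ):ℚ)
      = ∑ r ∈ Ioc (0:ℤ) (k-1), (-1:ℚ)^r * (r:ℚ) :=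
    sum_emod_reindex h k hk0 hcop (fun r => (-1:ℚ)^r * (r:ℚ))
  rw [hz, alt2 (k-1) (by omega), if_pos (by omega)]
  push_cast
  ring

lemma qval (h k i j : ℤ) (hh : 0 < h) (hk : 0 < k)
    (hlo : k*i/h < j) (hhi : h*j ≤ k*(i+1)) (hne : h*j ≠ k*(i+1)) : h*j/k = i := by
  have hlo' : k*i < j*h := (Int.ediv_lt_iff_lt_mul hh).mp hlo
  have h1 : i ≤ h*j/k := (Int.le_ediv_iff_mul_le hk).mpr
    (by have e1 : j*h = h*j := mul_comm j h
        have e2 : i*k = k*i := mul_comm i k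
        omega)
  have h2 : h*j/k < i+1 := (Int.ediv_lt_iff_lt_mul hk).mpr
    (by have e1 : (i+1)*k = k*(i+1) := mul_comm _ _
        omega)
  omega

lemma signfact (h k i j : ℤ) (hh1 : h % 2 = 1) (hk1 : k % 2 = 1) (hq : h*j/k = i) :
    (-1:ℚ)^(h*j % k) = (-1:ℚ)^j * (-1:ℚ)^i := by
  rw [neg_one_zpow_congr (emod_parity h k j hh1 hk1), hq,
    zpow_add₀ (by norm_num : (-1:ℚ) ≠ 0)]

-- interior block sum
lemma blockU1 (h k : ℤ) (i : ℤ) (hh : 1 < h) (hk : 1 < k)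
    (hh1 : h % 2 = 1) (hk1 : k % 2 = 1) (hcop : IsCoprime h k)
    (hi0 : 0 ≤ i) (hi : i + 1 ≤ h - 1) :
    ∑ j ∈ Ioc (k*i/h) (k*(i+1)/h), (-1:ℚ)^(h*j % k) * ((h*j/k : ℤ):ℚ)
      = ((i:ℚ) * (-1:ℚ)^i) * ((-1:ℚ)^(k*(i+1)/h)/2 - (-1:ℚ)^(k*i/h)/2) := by
  have hh0 : (0:ℤ) < h := by omega
  have hk0 : (0:ℤ) < k := by omega
  have hmono : k*i/h ≤ k*(i+1)/h := Int.ediv_le_ediv hh0 (by nlinarith)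
  have hcongr : ∀ j ∈ Ioc (k*i/h) (k*(i+1)/h),
      (-1:ℚ)^(h*j % k) * ((h*j/k : ℤ):ℚ) = ((i:ℚ) * (-1:ℚ)^i) * (-1:ℚ)^j := by
    intro j hj
    simp only [Finset.mem_Ioc] at hj
    have hhi : h*j ≤ k*(i+1) := (Int.le_ediv_iff_mul_le hh0).mp hj.2 |>.trans_eq' (mul_comm _ _) |>.trans_eq rfl
    have hne : h*j ≠ k*(i+1) := by
      intro heq
      have hdvd : h ∣ k*(i+1) := ⟨j, heq.symm⟩
      have := Int.le_of_dvd (by omega) (hcop.dvd_of_dvd_mul_left hdvd)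
      omega
    have hq : h*j/k = i := qval h k i j hh0 hk0 hj.1 hhi hne
    rw [signfact h k i j hh1 hk1 hq, hq]
    ring
  rw [Finset.sum_congr rfl hcongr, ← Finset.mul_sum, sum_neg_one_Ioc _ _ hmono]
  ring

-- last partial block
lemma blockU2 (h k : ℤ) (hh : 1 < h) (hk : 1 < k)
    (hh1 : h % 2 = 1) (hk1 : k % 2 = 1) :
    ∑ j ∈ Ioc (k*(h-1)/h) (k-1), (-1:ℚ)^(h*j % k) * ((h*j/k : ℤ):ℚ)
      = (((h:ℚ)-1) * (-1:ℚ)^(h-1)) * (1/2 - (-1:ℚ)^(k*(h-1)/h)/2) := by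
  have hh0 : (0:ℤ) < h := by omega
  have hk0 : (0:ℤ) < k := by omega
  have hupper : k*(h-1)/h ≤ k - 1 := by
    have : k*(h-1)/h < k := (Int.ediv_lt_iff_lt_mul hh0).mpr (by nlinarith)
    omega
  have hcongr : ∀ j ∈ Ioc (k*(h-1)/h) (k-1),
      (-1:ℚ)^(h*j % k) * ((h*j/k : ℤ):ℚ) = (((h:ℚ)-1) * (-1:ℚ)^(h-1)) * (-1:ℚ)^j := by
    intro j hj
    simp only [Finset.mem_Ioc] at hj
    have hhi : h*j ≤ k*(h-1+1) := by nlinarith [hj.2]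
    have hne : h*j ≠ k*(h-1+1) := by
      intro heq
      have : h*j ≤ h*(k-1) := by nlinarith [hj.2]
      nlinarith
    have hq : h*j/k = h-1 := qval h k (h-1) j hh0 hk0 hj.1 hhi hne
    rw [signfact h k (h-1) j hh1 hk1 hq, hq]
    push_cast
    ring
  rw [Finset.sum_congr rfl hcongr, ← Finset.mul_sum, sum_neg_one_Ioc _ _ hupper,
    neg_one_zpow_congr (show (k-1) % 2 = 0 % 2 by omega)]
  simp only [zpow_zero]
  ring

lemma blockQ (h k : ℤ) (hh : 1 < h) (hk : 1 < k)
    (hh1 : h % 2 = 1) (hk1 : k % 2 = 1) (hcop : IsCoprime h k) :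
    ∀ t : ℕ, (t:ℤ) ≤ h - 2 →
      ∑ j ∈ Ioc (0:ℤ) (k*((t:ℤ)+1)/h), (-1:ℚ)^(h*j % k) * ((h*j/k : ℤ):ℚ)
        = ((t:ℚ) * (-1:ℚ)^(t:ℤ)) * ((-1:ℚ)^(k*((t:ℤ)+1)/h)/2)
          - ∑ s ∈ Ioc (0:ℤ) (t:ℤ), (2*(s:ℚ)-1) * (-1:ℚ)^(k*s % h) / 2 := by
  have hh0 : (0:ℤ) < h := by omega
  have hk0 : (0:ℤ) < k := by omega
  intro t
  induction t with
  | zero =>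
    intro _
    push_cast
    rw [Finset.sum_eq_zero, Finset.sum_eq_zero]
    · norm_num
    · intro s hs
      simp only [Finset.mem_Ioc] at hs
      omega
    · intro j hj
      simp only [Finset.mem_Ioc] at hj
      have hhi : h*j ≤ k*(0+1) := by
        have := (Int.le_ediv_iff_mul_le hh0).mp (by simpa using hj.2)
        have e : j*h = h*j := mul_comm _ _
        omega
      have hne : h*j ≠ k*(0+1) := by
        intro heq
        have hdvd : h ∣ k*(0+1) := ⟨j, heq.symm⟩
        have := Int.le_of_dvd (by omega) (hcop.dvd_of_dvd_mul_left hdvd)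
        omega
      have hq : h*j/k = 0 := qval h k 0 j hh0 hk0 (by simpa using hj.1) hhi hne
      rw [hq]
      norm_num
  | succ t ih =>
    intro hle
    push_cast at hle ⊢
    have ih' := ih (by omega)
    have h1 : (0:ℤ) ≤ k*((t:ℤ)+1)/h := Int.ediv_nonneg (by positivity) (by omega)
    have h2 : k*((t:ℤ)+1)/h ≤ k*((t:ℤ)+1+1)/h := Int.ediv_le_ediv hh0 (by nlinarith)
    have hsplit := sum_Ioc_consec'
      (fun j : ℤ => (-1:ℚ)^(h*j % k) * ((h*j/k : ℤ):ℚ)) h1 h2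
    rw [← hsplit, ih', blockU1 h k ((t:ℤ)+1) hh hk hh1 hk1 hcop (by omega) (by omega)]
    have hD := sum_Ioc_succ_top'
      (fun s => (2*(s:ℚ)-1) * (-1:ℚ)^(k*s % h) / 2) (show (0:ℤ) ≤ (t:ℤ) by omega)
    beta_reduce at hD
    rw [hD]
    have hsgn : (-1:ℚ)^(k*((t:ℤ)+1) % h) = -((-1:ℚ)^((t:ℤ)) * (-1:ℚ)^(k*((t:ℤ)+1)/h)) := by
      rw [neg_one_zpow_congr (emod_parity k h ((t:ℤ)+1) hk1 hh1),
        show (t:ℤ)+1 + k*((t:ℤ)+1)/h = ((t:ℤ) + k*((t:ℤ)+1)/h) + 1 by ring,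
        zpow_add₀ (by norm_num : (-1:ℚ) ≠ 0), zpow_add₀ (by norm_num : (-1:ℚ) ≠ 0), zpow_one]
      ring
    have hpow : (-1:ℚ)^((t:ℤ)+1) = -(-1:ℚ)^((t:ℤ)) := by
      rw [zpow_add₀ (by norm_num : (-1:ℚ) ≠ 0), zpow_one]; ring
    rw [hsgn, hpow]
    push_cast
    ring

lemma step3 (h k : ℤ) (hh : 1 < h) (hk : 1 < k)
    (hh1 : h % 2 = 1) (hk1 : k % 2 = 1) (hcop : IsCoprime h k) :
    ∑ j ∈ Ioc (0:ℤ) (k-1), (-1:ℚ)^(h*j % k) * ((h*j/k : ℤ):ℚ)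
      = ((h:ℚ)-1)/2 - ∑ i ∈ Ioc (0:ℤ) (h-1), (-1:ℚ)^(k*i % h) * (i:ℚ) := by
  have hh0 : (0:ℤ) < h := by omega
  have hk0 : (0:ℤ) < k := by omega
  obtain ⟨n, hn⟩ : ∃ n : ℕ, h = (n:ℤ) + 2 := ⟨(h-2).toNat, by omega⟩
  have hnodd : (n:ℤ) % 2 = 1 := by omega
  have hQ := blockQ h k hh hk hh1 hk1 hcop n (by omega)
  have h1 : (0:ℤ) ≤ k*((n:ℤ)+1)/h := Int.ediv_nonneg (by positivity) (by omega)
  have h2 : k*((n:ℤ)+1)/h ≤ k - 1 := by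
    have : k*((n:ℤ)+1)/h < k := (Int.ediv_lt_iff_lt_mul hh0).mpr (by nlinarith)
    omega
  have hsplit := sum_Ioc_consec'
    (fun j : ℤ => (-1:ℚ)^(h*j % k) * ((h*j/k : ℤ):ℚ)) h1 h2
  have hb2 := blockU2 h k hh hk hh1 hk1
  rw [show h - 1 = (n:ℤ)+1 by omega] at hb2
  rw [← hsplit, hQ, hb2]
  -- right side : B = D'
  have hδ0 : ∑ i ∈ Ioc (0:ℤ) (h-1), (-1:ℚ)^(k*i % h) = 0 := by
    rw [sum_emod_reindex k h hh0 hcop.symm (fun r => (-1:ℚ)^r)]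
    exact alt1 (h-1) (by omega) (by omega)
  have hD' : ∑ s ∈ Ioc (0:ℤ) (h-1), (2*(s:ℚ)-1) * (-1:ℚ)^(k*s % h) / 2
      = ∑ s ∈ Ioc (0:ℤ) (h-1), (-1:ℚ)^(k*s % h) * (s:ℚ)
        - (1/2) * ∑ s ∈ Ioc (0:ℤ) (h-1), (-1:ℚ)^(k*s % h) := by
    rw [Finset.mul_sum, ← Finset.sum_sub_distrib]
    apply Finset.sum_congr rfl
    intros; ring
  have hB : ∑ s ∈ Ioc (0:ℤ) (h-1), (-1:ℚ)^(k*s % h) * (s:ℚ)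
      = ∑ s ∈ Ioc (0:ℤ) (h-1), (2*(s:ℚ)-1) * (-1:ℚ)^(k*s % h) / 2 := by
    rw [hD', hδ0]; ring
  rw [hB]
  have hDsucc := sum_Ioc_succ_top'
    (fun s => (2*(s:ℚ)-1) * (-1:ℚ)^(k*s % h) / 2) (show (0:ℤ) ≤ (n:ℤ) by omega)
  beta_reduce at hDsucc
  rw [show h - 1 = (n:ℤ)+1 by omega, hDsucc]
  have hsgn2 : (-1:ℚ)^(k*((n:ℤ)+1) % h) = (-1:ℚ)^(k*((n:ℤ)+1)/h) := by
    rw [neg_one_zpow_congr (emod_parity k h ((n:ℤ)+1) hk1 hh1)]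
    exact neg_one_zpow_congr (by omega)
  have hneg : (-1:ℚ)^((n:ℤ)) = -1 := by
    rw [neg_one_zpow_emod, hnodd, zpow_one]
  have hpos : (-1:ℚ)^((n:ℤ)+1) = 1 := by
    rw [zpow_add₀ (by norm_num : (-1:ℚ) ≠ 0), hneg, zpow_one]; ring
  have hcast : (h:ℚ) = (n:ℚ) + 2 := by exact_mod_cast congrArg (Int.cast : ℤ → ℚ) hn
  rw [hsgn2, hneg, hpos, hcast]
  push_cast
  ring

theorem hardy_rec (h k : ℤ) (hh : 1 < h) (hk : 1 < k)
    (hh1 : h % 2 = 1) (hk1 : k % 2 = 1) (hcop : IsCoprime h k) :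
    s5 h k + s5 k h = ((h:ℚ)*(k:ℚ) - 1) / (2*(h:ℚ)*(k:ℚ)) := by
  have hh0 : (h:ℚ) ≠ 0 := by exact_mod_cast (by omega : h ≠ 0)
  have hk0 : (k:ℚ) ≠ 0 := by exact_mod_cast (by omega : k ≠ 0)
  rw [s5_eq h k hk hh1 hk1 hcop, s5_eq k h hh hk1 hh1 hcop.symm]
  have e1 := step2 h k hk hh1 hk1 hcop
  have e2 := step3 h k hh hk hh1 hk1 hcop
  set A := ∑ j ∈ Ioc (0:ℤ) (k-1), (-1:ℚ)^(h*j % k) * (j:ℚ) with hA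
  set B := ∑ i ∈ Ioc (0:ℤ) (h-1), (-1:ℚ)^(k*i % h) * (i:ℚ) with hB
  set C := ∑ j ∈ Ioc (0:ℤ) (k-1), (-1:ℚ)^(h*j % k) * ((h*j/k : ℤ):ℚ) with hC
  have eA : A = ((k:ℚ)*C + ((k:ℚ)-1)/2)/(h:ℚ) := by
    rw [eq_div_iff hh0]; linear_combination e1
  rw [eA, e2]
  field_simp
  ring

lemma cassini : ∀ m : ℕ, (Nat.fib m : ℤ) * Nat.fib (m+2) - (Nat.fib (m+1):ℤ)^2
    = (-1:ℤ)^(m+1) := by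
  intro m
  induction m with
  | zero => norm_num
  | succ m ih =>
    have hrec : (Nat.fib (m+2) : ℤ) = Nat.fib m + Nat.fib (m+1) := by
      exact_mod_cast (Nat.fib_add_two (n := m))
    have hrec2 : (Nat.fib (m+3) : ℤ) = Nat.fib (m+1) + Nat.fib (m+2) := by
      exact_mod_cast (Nat.fib_add_two (n := m+1))
    rw [show m+1+2 = m+3 from rfl, hrec2, pow_succ]
    linear_combination (-1:ℤ)*ih - (Nat.fib (m+2):ℤ)*hrec

lemma fib_odd3 : ∀ m : ℕ, Nat.fib (3*m+1) % 2 = 1 ∧ Nat.fib (3*m+2) % 2 = 1 := by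
  intro m
  induction m with
  | zero => norm_num
  | succ m ih =>
    have h1 : Nat.fib (3*m+3) = Nat.fib (3*m+1) + Nat.fib (3*m+2) :=
      Nat.fib_add_two (n := 3*m+1)
    have h2 : Nat.fib (3*m+4) = Nat.fib (3*m+2) + Nat.fib (3*m+3) :=
      Nat.fib_add_two (n := 3*m+2)
    have h3 : Nat.fib (3*m+5) = Nat.fib (3*m+3) + Nat.fib (3*m+4) :=
      Nat.fib_add_two (n := 3*m+3)
    constructor
    · rw [show 3*(m+1)+1 = 3*m+4 by ring]
      omega
    · rw [show 3*(m+1)+2 = 3*m+5 by ring]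
      omega

theorem stmt_15 (n : ℕ) (hn : 0 < n) (h k : ℤ)
    (hdef : h = (Nat.fib (6 * n - 1) : ℤ)) (kdef : k = (Nat.fib (6 * n + 1) : ℤ)) :
    s5 h k + s5 k h = (1 / 2) * ((h : ℚ) / (k : ℚ) + (k : ℚ) / (h : ℚ) - 2) := by
  have hodd_h : Nat.fib (6*n-1) % 2 = 1 := by
    rw [show 6*n-1 = 3*(2*n-1)+2 by omega]; exact (fib_odd3 (2*n-1)).2
  have hodd_k : Nat.fib (6*n+1) % 2 = 1 := by
    rw [show 6*n+1 = 3*(2*n)+1 by omega]; exact (fib_odd3 (2*n)).1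
  have hgt_h : 1 < Nat.fib (6*n-1) := by
    have h5 : Nat.fib 5 ≤ Nat.fib (6*n-1) := Nat.fib_mono (by omega)
    have : Nat.fib 5 = 5 := by decide
    omega
  have hgt_k : 1 < Nat.fib (6*n+1) := by
    have h5 : Nat.fib 5 ≤ Nat.fib (6*n+1) := Nat.fib_mono (by omega)
    have : Nat.fib 5 = 5 := by decide
    omega
  have hgcd : Nat.gcd (6*n-1) (6*n+1) = 1 := by
    have hd : Nat.gcd (6*n-1) (6*n+1) ∣ 2 := by
      have hs := Nat.dvd_sub (Nat.gcd_dvd_right (6*n-1) (6*n+1))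
        (Nat.gcd_dvd_left (6*n-1) (6*n+1))
      rwa [show 6*n+1 - (6*n-1) = 2 by omega] at hs
    have hr := Nat.gcd_dvd_right (6*n-1) (6*n+1)
    rcases (Nat.dvd_prime Nat.prime_two).mp hd with h1 | h2
    · exact h1
    · rw [h2] at hr; omega
  have hcopN : Nat.Coprime (Nat.fib (6*n-1)) (Nat.fib (6*n+1)) := by
    unfold Nat.Coprime
    rw [← Nat.fib_gcd, hgcd]
    rfl
  have hcop : IsCoprime h k := by
    rw [hdef, kdef, Int.isCoprime_iff_gcd_eq_one, Int.gcd_natCast_natCast]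
    exact hcopN
  have hc := cassini (6*n-1)
  rw [show 6*n-1+2 = 6*n+1 by omega, show 6*n-1+1 = 6*n by omega] at hc
  rw [show ((-1):ℤ)^(6*n) = 1 by rw [show 6*n = 2*(3*n) by ring, pow_mul]; norm_num] at hc
  have hsub : Nat.fib (6*n+1) = Nat.fib (6*n-1) + Nat.fib (6*n) := by
    have := Nat.fib_add_two (n := 6*n-1)
    rw [show 6*n-1+2 = 6*n+1 by omega, show 6*n-1+1 = 6*n by omega] at this
    omega
  rw [hardy_rec h k (by rw [hdef]; exact_mod_cast hgt_h) (by rw [kdef]; exact_mod_cast hgt_k)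
    (by rw [hdef]; omega) (by rw [kdef]; omega) hcop]
  have hq : (h:ℚ)*(k:ℚ) - 1 = ((k:ℚ) - (h:ℚ))^2 := by
    have hcQ : (h:ℚ)*(k:ℚ) - ((Nat.fib (6*n) : ℚ))^2 = 1 := by
      rw [hdef, kdef]; exact_mod_cast hc
    have hsQ : (k:ℚ) - (h:ℚ) = (Nat.fib (6*n) : ℚ) := by
      rw [hdef, kdef]
      have hs : (Nat.fib (6*n+1) : ℚ) = (Nat.fib (6*n-1) : ℚ) + (Nat.fib (6*n) : ℚ) := by
        exact_mod_cast hsub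
      push_cast
      linarith [hs]
    linear_combination hcQ - ((Nat.fib (6*n) : ℚ) + (k:ℚ) - (h:ℚ))*hsQ
  have hh0 : (h:ℚ) ≠ 0 := by
    rw [hdef]; exact_mod_cast (by omega : (Nat.fib (6*n-1) : ℤ) ≠ 0)
  have hk0 : (k:ℚ) ≠ 0 := by
    rw [kdef]; exact_mod_cast (by omega : (Nat.fib (6*n+1) : ℤ) ≠ 0)
  rw [hq]
  field_simp
  ring
end

section
/- Let h and k be coprime odd positive integers. Then C₁(h,k) = 1/2 - 1/(2k). -/
/-- `C₁(h,k) = Σ_{j=1}^{k-1} ((hj/k))·(-1)^{j+⌊hj/k⌋}`. -/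
noncomputable def C1 (h k : ℤ) : ℚ :=
  ∑ j ∈ Finset.Icc (1 : ℤ) (k - 1),
    saw (((h * j : ℤ) : ℚ) / (k : ℚ)) * (-1 : ℚ) ^ (j + ⌊((h * j : ℤ) : ℚ) / (k : ℚ)⌋)

lemma icc_insert (b : ℤ) (hb : 0 ≤ b) :
    Finset.Icc (1:ℤ) (b+1) = insert (b+1) (Finset.Icc 1 b) := by
  ext x; simp only [Finset.mem_Icc, Finset.mem_insert]; omega

lemma floor_int_div_s18 (m k : ℤ) (hk : 0 < k) : ⌊((m : ℚ)) / (k : ℚ)⌋ = m / k := by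
  have h1 : ((k.toNat : ℕ) : ℚ) = (k : ℚ) := by exact_mod_cast Int.toNat_of_nonneg hk.le
  rw [← h1, Rat.floor_intCast_div_natCast]
  congr 1
  exact Int.toNat_of_nonneg hk.le

/-- the sum `∑_{r=1}^{2m} ((r:ℚ)/c - 1/2)·(-1)^r = m/c`. -/
lemma sumA (c : ℚ) : ∀ m : ℤ, 0 ≤ m →
    ∑ r ∈ Finset.Icc (1:ℤ) (2*m), (((r:ℚ))/c - 1/2) * (-1:ℚ)^r = (m : ℚ)/c := by
  refine Int.le_induction ?_ ?_
  · simp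
  · intro n hn ih
    have h1 : 2*(n+1) = (2*n+1)+1 := by ring
    rw [h1, icc_insert _ (by omega), Finset.sum_insert (by simp only [Finset.mem_Icc, not_and, not_le]; omega),
        icc_insert _ (by omega), Finset.sum_insert (by simp only [Finset.mem_Icc, not_and, not_le]; omega), ih]
    have he : Even ((2*n+1)+1) := ⟨n+1, by ring⟩
    have ho : Odd (2*n+1) := ⟨n, by ring⟩
    rw [he.neg_zpow, one_zpow, ho.neg_one_zpow]
    push_cast
    ring

theorem stmt_18 (h k : ℤ) (hh : 0 < h) (hk : 0 < k) (hco : IsCoprime h k)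
    (hho : Odd h) (hko : Odd k) :
    C1 h k = 1 / 2 - 1 / (2 * (k : ℚ)) := by
  obtain ⟨a, b, hab⟩ := hco
  obtain ⟨p, hp⟩ := hho
  obtain ⟨q, hq⟩ := hko
  have hkQ : (k : ℚ) ≠ 0 := by positivity
  -- dvd facts
  have key : ∀ u : ℤ, h * u % k = 0 → 1 ≤ u → u ≤ k - 1 → False := by
    intro u hu h1 h2
    have hdvd : k ∣ h * u := Int.dvd_of_emod_eq_zero hu
    have hku : k ∣ u := by
      have : u = a * (h * u) + (b * u) * k := by linear_combination (-u) * hab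
      rw [this]
      exact dvd_add (Dvd.dvd.mul_left hdvd a) (Dvd.intro_left _ rfl)
    have := Int.le_of_dvd (by omega) hku
    omega
  -- step 1: rewrite C1 as sum over residues
  have step1 : C1 h k = ∑ r ∈ Finset.Icc (1:ℤ) (k-1), (((r:ℚ))/(k:ℚ) - 1/2) * (-1:ℚ)^r := by
    unfold C1
    apply Finset.sum_nbij' (i := fun j => (h * j) % k) (j := fun r => (a * r) % k)
    · intro j hj
      simp only [Finset.mem_Icc] at hj ⊢
      have h0 : 0 ≤ h * j % k := Int.emod_nonneg _ (by omega)
      have h1 : h * j % k < k := Int.emod_lt_of_pos _ hk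
      have hne : h * j % k ≠ 0 := fun h0' => key j h0' hj.1 hj.2
      omega
    · intro r hr
      simp only [Finset.mem_Icc] at hr ⊢
      have h0 : 0 ≤ a * r % k := Int.emod_nonneg _ (by omega)
      have h1 : a * r % k < k := Int.emod_lt_of_pos _ hk
      have hne : a * r % k ≠ 0 := by
        intro h0'
        have hdvd : k ∣ a * r := Int.dvd_of_emod_eq_zero h0'
        have hkr : k ∣ r := by
          have : r = h * (a * r) + (b * r) * k := by linear_combination (-r) * hab
          rw [this]
          exact dvd_add (Dvd.dvd.mul_left hdvd h) (Dvd.intro_left _ rfl)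
        have := Int.le_of_dvd (by omega) hkr
        omega
      omega
    · intro j hj
      simp only [Finset.mem_Icc] at hj
      have e1 : a * (h * j % k) % k = a * (h * j) % k := by
        rw [Int.mul_emod, Int.emod_emod_of_dvd _ dvd_rfl, ← Int.mul_emod]
      have e2 : a * (h * j) = j + k * (-(j * b)) := by linear_combination j * hab
      rw [e1, e2, Int.add_mul_emod_self_left, Int.emod_eq_of_lt (by omega) (by omega)]
    · intro r hr
      simp only [Finset.mem_Icc] at hr
      have e1 : h * (a * r % k) % k = h * (a * r) % k := by
        rw [Int.mul_emod, Int.emod_emod_of_dvd _ dvd_rfl, ← Int.mul_emod]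
      have e2 : h * (a * r) = r + k * (-(r * b)) := by linear_combination r * hab
      rw [e1, e2, Int.add_mul_emod_self_left, Int.emod_eq_of_lt (by omega) (by omega)]
    · intro j hj
      simp only [Finset.mem_Icc] at hj
      have hfl : ⌊((h * j : ℤ) : ℚ) / (k : ℚ)⌋ = h * j / k := floor_int_div_s18 _ _ hk
      have hr0 : h * j % k ≠ 0 := fun h0' => key j h0' hj.1 hj.2
      have hdm := Int.mul_ediv_add_emod (h * j) k
      have hdmQ : (k : ℚ) * ((h * j / k : ℤ) : ℚ) + ((h * j % k : ℤ) : ℚ) = ((h * j : ℤ) : ℚ) := by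
        exact_mod_cast congrArg (Int.cast : ℤ → ℚ) hdm
      have hne : ((h * j : ℤ) : ℚ) / (k : ℚ) ≠ ((⌊((h * j : ℤ) : ℚ) / (k : ℚ)⌋ : ℤ) : ℚ) := by
        rw [hfl]
        intro hcon
        apply hr0
        have h2 : (h * j : ℤ) = (h * j / k) * k := by
          exact_mod_cast (div_eq_iff hkQ).mp hcon
        exact Int.emod_eq_zero_of_dvd ⟨h * j / k, by linear_combination h2⟩
      have hsign : (-1 : ℚ) ^ (j + ⌊((h * j : ℤ) : ℚ) / (k : ℚ)⌋) = (-1 : ℚ) ^ (h * j % k) := by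
        rw [hfl]
        have hpar : Even ((j + h * j / k) + h * j % k) :=
          ⟨(p + 1) * j - q * (h * j / k), by linear_combination hdm + j * hp - (h * j / k) * hq⟩
        rcases Int.even_or_odd (h * j % k) with hE | hO
        · rw [((Int.even_add.mp hpar).mpr hE).neg_zpow, hE.neg_zpow, one_zpow, one_zpow]
        · have : Odd (j + h * j / k) := by
            rw [← Int.not_even_iff_odd]
            intro hEv
            exact (Int.not_odd_iff_even.mpr ((Int.even_add.mp hpar).mp hEv)) hO
          rw [this.neg_one_zpow, hO.neg_one_zpow]
      rw [hsign]
      simp only [saw]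
      rw [if_neg hne, hfl]
      congr 1
      push_cast at hdmQ ⊢
      field_simp
      linarith [hdmQ]
  rw [step1]
  have h2 : k - 1 = 2 * q := by omega
  rw [h2, sumA (k:ℚ) q (by omega)]
  have hkq : (q : ℚ) = ((k:ℚ) - 1)/2 := by
    have : (k : ℚ) = 2*q + 1 := by exact_mod_cast congrArg (Int.cast : ℤ → ℚ) hq
    rw [this]; ring
  rw [hkq]
  field_simp
end
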